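/- Let n be a positive integer and let K_p, K_d, K_o ∈ ℝ^{n×n} be symmetric positive definite matrices. Then every eigenvalue λ ∈ ℂ of the real 3n×3n block matrix M = [[0, I_n, 0], [−K_p, −K_d, I_n], [0, −K_o⁻¹, −I_n]] satisfies Re(λ) < 0 (i.e. M is Hurwitz). -/

import Mathlib

open Matrix
open scoped ComplexOrder

lemma exists_eigvec {m : Type*} [Fintype m] [DecidableEq m] (A : Matrix m m ℂ) {μ : ℂ}
    (h : μ ∈ spectrum ℂ A) : ∃ v : m → ℂ, v ≠ 0 ∧ A *ᵥ v = μ • v := by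
  rw [← AlgEquiv.spectrum_eq (Matrix.toLinAlgEquiv' (R := ℂ)) A] at h
  obtain ⟨v, hv⟩ :=
    (Module.End.hasEigenvalue_iff_mem_spectrum.mpr h).exists_hasEigenvector
  exact ⟨v, hv.2, by simpa [Matrix.toLinAlgEquiv'_apply] using hv.apply_eq_smul⟩

lemma posDef_map_ofReal {m : Type*} [Fintype m] {A : Matrix m m ℝ} (hA : A.PosDef) :
    (A.map (Complex.ofReal)).PosDef := by
  have hAsymm : Aᵀ = A := (conjTranspose_eq_transpose_of_trivial A) ▸ hA.1
  refine Matrix.PosDef.of_dotProduct_mulVec_pos ?_ ?_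
  · exact hA.1.map _ (fun r => by simp)
  · intro w hw
    set a : m → ℝ := fun i => (w i).re with ha
    set b : m → ℝ := fun i => (w i).im with hb
    have hwdec : w = (fun i => (a i : ℂ)) + Complex.I • (fun i => (b i : ℂ)) := by
      funext i
      simp only [ha, hb, Pi.add_apply, Pi.smul_apply, smul_eq_mul]
      rw [mul_comm]
      exact (Complex.re_add_im (w i)).symm
    have hmap : ∀ u : m → ℝ, (A.map Complex.ofReal) *ᵥ (fun i => (u i : ℂ))
        = fun i => ((A *ᵥ u) i : ℂ) := by
      intro u
      funext i
      exact (RingHom.map_mulVec Complex.ofRealHom A u i).symm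
    have hdot : ∀ u u' : m → ℝ,
        (fun i => (u i : ℂ)) ⬝ᵥ (fun i => (u' i : ℂ)) = ((u ⬝ᵥ u' : ℝ) : ℂ) := by
      intro u u'
      simpa [Function.comp_def] using (RingHom.map_dotProduct Complex.ofRealHom u u').symm
    have hsym : ∀ u u' : m → ℝ, u ⬝ᵥ (A *ᵥ u') = u' ⬝ᵥ (A *ᵥ u) := by
      intro u u'
      rw [dotProduct_mulVec, ← Matrix.mulVec_transpose, hAsymm, dotProduct_comm]
    have hstar : star w = (fun i => (a i : ℂ)) - Complex.I • (fun i => (b i : ℂ)) := by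
      rw [hwdec]
      funext i
      simp [ha, hb, Complex.ext_iff]
    have key : star w ⬝ᵥ ((A.map Complex.ofReal) *ᵥ w)
        = ((a ⬝ᵥ (A *ᵥ a) + b ⬝ᵥ (A *ᵥ b) : ℝ) : ℂ) := by
      rw [hstar]
      conv_lhs => rw [hwdec]
      rw [mulVec_add, mulVec_smul, hmap, hmap, sub_dotProduct, smul_dotProduct,
        dotProduct_add, dotProduct_add, dotProduct_smul, dotProduct_smul,
        hdot, hdot, hdot, hdot, hsym b a]
      have hI : Complex.I * Complex.I = -1 := Complex.I_mul_I
      simp only [smul_eq_mul]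
      push_cast
      linear_combination (-((b ⬝ᵥ (A *ᵥ b) : ℝ) : ℂ)) * hI
    rw [key]
    have hab : a ≠ 0 ∨ b ≠ 0 := by
      by_contra hc
      push_neg at hc
      apply hw
      funext i
      have h1 := congrFun hc.1 i
      have h2 := congrFun hc.2 i
      simp only [ha, hb, Pi.zero_apply] at h1 h2
      exact Complex.ext h1 h2
    have hnn : ∀ u : m → ℝ, 0 ≤ u ⬝ᵥ (A *ᵥ u) := by
      intro u
      by_cases hu : u = 0
      · simp [hu]
      · exact le_of_lt (by simpa using hA.dotProduct_mulVec_pos hu)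
    have hpos : 0 < a ⬝ᵥ (A *ᵥ a) + b ⬝ᵥ (A *ᵥ b) := by
      rcases hab with h | h
      · have := hA.dotProduct_mulVec_pos h
        simp only [star_trivial] at this
        linarith [hnn b]
      · have := hA.dotProduct_mulVec_pos h
        simp only [star_trivial] at this
        linarith [hnn a]
    exact_mod_cast Complex.real_lt_real.mpr hpos


section Helpers

variable {m : Type*} [Fintype m]

lemma quad_re {M : Matrix m m ℂ} (hM : M.PosSemidef) (x : m → ℂ) :
    (star x ⬝ᵥ (M *ᵥ x)).im = 0 ∧ 0 ≤ (star x ⬝ᵥ (M *ᵥ x)).re := by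
  have h := hM.dotProduct_mulVec_nonneg x
  rw [Complex.le_def] at h
  exact ⟨h.2.symm, by simpa using h.1⟩

lemma quad_re_pos {M : Matrix m m ℂ} (hM : M.PosDef) {x : m → ℂ} (hx : x ≠ 0) :
    0 < (star x ⬝ᵥ (M *ᵥ x)).re := by
  simpa using hM.re_dotProduct_pos hx

lemma herm_dot {M : Matrix m m ℂ} (hM : M.IsHermitian) (u w : m → ℂ) :
    star (star u ⬝ᵥ (M *ᵥ w)) = star w ⬝ᵥ (M *ᵥ u) := by
  have h1 : star (star u ⬝ᵥ (M *ᵥ w)) = star (M *ᵥ w) ⬝ᵥ u := by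
    rw [star_dotProduct, star_star]
  rw [h1, star_mulVec, ← dotProduct_mulVec, hM.eq]

lemma herm_dot_re {M : Matrix m m ℂ} (hM : M.IsHermitian) (u w : m → ℂ) :
    (star u ⬝ᵥ (M *ᵥ w)).re = (star w ⬝ᵥ (M *ᵥ u)).re := by
  rw [← herm_dot hM u w]
  simp

lemma dot_swap_re (u w : m → ℂ) : (star u ⬝ᵥ w).re = (star w ⬝ᵥ u).re := by
  rw [star_dotProduct]
  simp

end Helpers

/-- For symmetric positive definite `K_p, K_d, K_o ∈ ℝ^{n×n}`, every
complex eigenvalue of the `3n×3n` block matrix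
`M = [[0, I, 0], [-K_p, -K_d, I], [0, -K_o⁻¹, -I]]` has strictly negative real part,
i.e. `M` is Hurwitz. -/
theorem closed_loop_matrix_with_integral_isHurwitz
    (n : ℕ) (hn : 0 < n) (Kp Kd Ko : Matrix (Fin n) (Fin n) ℝ)
    (hKp : Kp.PosDef) (hKd : Kd.PosDef) (hKo : Ko.PosDef) :
    ∀ μ ∈ spectrum ℂ
      ((fromBlocks
          (fromBlocks (0 : Matrix (Fin n) (Fin n) ℝ) 1 (-Kp) (-Kd))
          (fromRows (0 : Matrix (Fin n) (Fin n) ℝ) 1)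
          (fromCols (0 : Matrix (Fin n) (Fin n) ℝ) (-Ko⁻¹))
          (-1)).map (Complex.ofReal)),
      μ.re < 0 := by
  intro μ hμ
  have hM : (fromBlocks
          (fromBlocks (0 : Matrix (Fin n) (Fin n) ℝ) 1 (-Kp) (-Kd))
          (fromRows (0 : Matrix (Fin n) (Fin n) ℝ) 1)
          (fromCols (0 : Matrix (Fin n) (Fin n) ℝ) (-Ko⁻¹))
          (-1)).map (Complex.ofReal)
      = fromBlocks
          (fromBlocks (0 : Matrix (Fin n) (Fin n) ℂ) 1
            (-(Kp.map Complex.ofReal)) (-(Kd.map Complex.ofReal)))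
          (fromRows (0 : Matrix (Fin n) (Fin n) ℂ) 1)
          (fromCols (0 : Matrix (Fin n) (Fin n) ℂ) (-((Ko⁻¹).map Complex.ofReal)))
          (-1) := by
    ext ((i | i) | i) ((j | j) | j) <;>
      simp [fromBlocks, fromRows_apply_inl, fromRows_apply_inr, fromCols, Matrix.map_apply,
        Matrix.one_apply, apply_ite]
  rw [hM] at hμ
  obtain ⟨v, hv0, hv⟩ := exists_eigvec _ hμ
  set x : Fin n → ℂ := fun i => v (Sum.inl (Sum.inl i)) with hx
  set y : Fin n → ℂ := fun i => v (Sum.inl (Sum.inr i)) with hy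
  set z : Fin n → ℂ := fun i => v (Sum.inr i) with hz
  have hsplit : v = Sum.elim (Sum.elim x y) z := by
    funext i
    rcases i with (i | i) | i <;> rfl
  rw [hsplit] at hv
  simp only [fromBlocks_mulVec, Sum.elim_comp_inl, Sum.elim_comp_inr, fromRows_mulVec,
    fromCols_mulVec_sumElim, zero_mulVec, one_mulVec, zero_add, add_zero,
    neg_mulVec] at hv
  have e1 : y = μ • x := by
    funext i
    simpa using congrFun hv (Sum.inl (Sum.inl i))
  have e2 : -((Kp.map Complex.ofReal) *ᵥ x) + -((Kd.map Complex.ofReal) *ᵥ y) + z = μ • y := by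
    funext i
    simpa using congrFun hv (Sum.inl (Sum.inr i))
  have e3 : -(((Ko⁻¹).map Complex.ofReal) *ᵥ y) + -z = μ • z := by
    funext i
    simpa using congrFun hv (Sum.inr i)
  have hKpc := posDef_map_ofReal hKp
  have hKdc := posDef_map_ofReal hKd
  have hKoc := posDef_map_ofReal hKo
  have hKoKoinv : (Ko.map Complex.ofReal) * ((Ko⁻¹).map Complex.ofReal) = 1 := by
    have h1 : (Ko.map Complex.ofReal) * ((Ko⁻¹).map Complex.ofReal)
        = (Ko * Ko⁻¹).map Complex.ofReal :=
      (Matrix.map_mul (f := Complex.ofRealHom)).symm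
    rw [h1, Matrix.mul_nonsing_inv Ko (isUnit_iff_ne_zero.mpr hKo.det_pos.ne'),
      Matrix.map_one Complex.ofReal Complex.ofReal_zero Complex.ofReal_one]
  have e3' : -y + -((Ko.map Complex.ofReal) *ᵥ z) = μ • ((Ko.map Complex.ofReal) *ᵥ z) := by
    have h := congrArg (fun u => (Ko.map Complex.ofReal) *ᵥ u) e3
    simpa only [mulVec_add, mulVec_neg, mulVec_smul, mulVec_mulVec, hKoKoinv, one_mulVec] using h
  have s1 : star x ⬝ᵥ ((Kp.map Complex.ofReal) *ᵥ y)
      = μ * (star x ⬝ᵥ ((Kp.map Complex.ofReal) *ᵥ x)) := by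
    rw [e1, mulVec_smul, dotProduct_smul, smul_eq_mul]
  have s2 : star y ⬝ᵥ (-((Kp.map Complex.ofReal) *ᵥ x) + -((Kd.map Complex.ofReal) *ᵥ y) + z)
      = μ * (star y ⬝ᵥ y) := by
    rw [e2, dotProduct_smul, smul_eq_mul]
  have s3 : star z ⬝ᵥ (-y + -((Ko.map Complex.ofReal) *ᵥ z))
      = μ * (star z ⬝ᵥ ((Ko.map Complex.ofReal) *ᵥ z)) := by
    rw [e3', dotProduct_smul, smul_eq_mul]
  obtain ⟨haim, hare⟩ := quad_re hKpc.posSemidef x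
  obtain ⟨hcim, hcre⟩ := quad_re hKoc.posSemidef z
  obtain ⟨hqim, hqre⟩ := quad_re hKdc.posSemidef y
  obtain ⟨hbim, hbre⟩ : (star y ⬝ᵥ y).im = 0 ∧ 0 ≤ (star y ⬝ᵥ y).re := by
    have := quad_re (Matrix.PosDef.one (n := Fin n) (R := ℂ)).posSemidef y
    simpa [one_mulVec] using this
  have r1 : (star x ⬝ᵥ ((Kp.map Complex.ofReal) *ᵥ y)).re
      = μ.re * (star x ⬝ᵥ ((Kp.map Complex.ofReal) *ᵥ x)).re := by
    rw [s1, Complex.mul_re, haim]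
    ring
  have r2 : -(star y ⬝ᵥ ((Kp.map Complex.ofReal) *ᵥ x)).re
      - (star y ⬝ᵥ ((Kd.map Complex.ofReal) *ᵥ y)).re + (star y ⬝ᵥ z).re
      = μ.re * (star y ⬝ᵥ y).re := by
    have h := congrArg Complex.re s2
    simp only [dotProduct_add, dotProduct_neg, Complex.add_re, Complex.neg_re,
      Complex.mul_re, hbim, mul_zero, sub_zero] at h
    linarith
  have r3 : -(star z ⬝ᵥ y).re - (star z ⬝ᵥ ((Ko.map Complex.ofReal) *ᵥ z)).re
      = μ.re * (star z ⬝ᵥ ((Ko.map Complex.ofReal) *ᵥ z)).re := by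
    have h := congrArg Complex.re s3
    simp only [dotProduct_add, dotProduct_neg, Complex.add_re, Complex.neg_re,
      Complex.mul_re, hcim, mul_zero, sub_zero] at h
    linarith
  have hswap1 : (star x ⬝ᵥ ((Kp.map Complex.ofReal) *ᵥ y)).re
      = (star y ⬝ᵥ ((Kp.map Complex.ofReal) *ᵥ x)).re := herm_dot_re hKpc.1 x y
  have hswap2 : (star y ⬝ᵥ z).re = (star z ⬝ᵥ y).re := dot_swap_re y z
  have key : μ.re * ((star x ⬝ᵥ ((Kp.map Complex.ofReal) *ᵥ x)).re + (star y ⬝ᵥ y).re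
        + (star z ⬝ᵥ ((Ko.map Complex.ofReal) *ᵥ z)).re)
      = -((star y ⬝ᵥ ((Kd.map Complex.ofReal) *ᵥ y)).re
        + (star z ⬝ᵥ ((Ko.map Complex.ofReal) *ᵥ z)).re) := by
    linarith [r1, r2, r3, hswap1, hswap2]
  by_cases hyz : y = 0 ∧ z = 0
  · exfalso
    obtain ⟨hy0, hz0⟩ := hyz
    have hx0 : x = 0 := by
      by_contra hx0
      have hpos := hKpc.dotProduct_mulVec_pos hx0
      have hKx : (Kp.map Complex.ofReal) *ᵥ x = 0 := by
        have := e2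
        rw [hy0, hz0] at this
        simpa using this
      rw [hKx] at hpos
      simp at hpos
    apply hv0
    rw [hsplit, hx0, hy0, hz0]
    funext i
    rcases i with (i | i) | i <;> rfl
  · have hnum : 0 < (star y ⬝ᵥ ((Kd.map Complex.ofReal) *ᵥ y)).re
        + (star z ⬝ᵥ ((Ko.map Complex.ofReal) *ᵥ z)).re := by
      rcases not_and_or.mp hyz with h | h
      · have := quad_re_pos hKdc h
        linarith
      · have := quad_re_pos hKoc h
        linarith
    have hden : 0 < (star x ⬝ᵥ ((Kp.map Complex.ofReal) *ᵥ x)).re + (star y ⬝ᵥ y).re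
        + (star z ⬝ᵥ ((Ko.map Complex.ofReal) *ᵥ z)).re := by
      rcases not_and_or.mp hyz with h | h
      · have hb : 0 < (star y ⬝ᵥ y).re := by
          have := quad_re_pos (Matrix.PosDef.one (n := Fin n) (R := ℂ)) h
          simpa [one_mulVec] using this
        linarith
      · have := quad_re_pos hKoc h
        linarith
    nlinarith
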